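/- For every positive integer n, the real function ρ defined on the open interval (0, n/2) by ρ(x) = (x/2)·(2n/x)^{2x} is strictly monotone increasing. -/

import Mathlib

/-- for `n ∈ ℕ+`, the function `x ↦ (x/2)·(2n/x)^(2x)` is strictly monotone
increasing on `(0, n/2)`. -/
theorem rho_strictMonoOn (n : ℕ) (hn : 0 < n) :
    StrictMonoOn (fun x : ℝ => x / 2 * (2 * n / x) ^ (2 * x)) (Set.Ioo 0 ((n : ℝ) / 2)) := by
  have hn' : (0:ℝ) < n := by exact_mod_cast hn
  set g : ℝ → ℝ := fun x => Real.log x - Real.log 2 + 2*x*Real.log (2*n) - 2*x*Real.log x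
    with hg
  have hderiv : ∀ x ∈ Set.Ioo (0:ℝ) ((n:ℝ)/2),
      HasDerivAt g (x⁻¹ - 0 + (0 * Real.log (2*n) + 2 * Real.log (2*n))
        - (0 * Real.log x + 2 * Real.log x + 2*x*x⁻¹)) x := by
    intro x hx
    have hx0 : (0:ℝ) < x := hx.1
    have h1 : HasDerivAt Real.log x⁻¹ x := Real.hasDerivAt_log hx0.ne'
    have h2 : HasDerivAt (fun x : ℝ => 2*x) 2 x := by
      simpa using (hasDerivAt_id x).const_mul 2
    have h3 : HasDerivAt (fun x : ℝ => 2*x*Real.log (2*n)) (2 * Real.log (2*n)) x := by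
      simpa using h2.mul_const (Real.log (2*n))
    have h4 : HasDerivAt (fun x : ℝ => 2*x*Real.log x) (2 * Real.log x + 2*x*x⁻¹) x :=
      h2.mul h1
    have := ((h1.sub_const (Real.log 2)).add h3).sub h4
    convert this using 1
    · rfl
    · rfl
    · rfl
    · ring
  have hcont : ContinuousOn g (Set.Ioo 0 ((n:ℝ)/2)) := fun x hx =>
    (hderiv x hx).continuousAt.continuousWithinAt
  have hgmono : StrictMonoOn g (Set.Ioo 0 ((n:ℝ)/2)) := by
    apply strictMonoOn_of_deriv_pos (convex_Ioo _ _) hcont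
    rw [interior_Ioo]
    intro x hx
    rw [(hderiv x hx).deriv]
    have hx0 : (0:ℝ) < x := hx.1
    have hxinv : 0 < x⁻¹ := by positivity
    have hlog : Real.log x + 2 * Real.log 2 ≤ Real.log (2*n) := by
      have h4 : 4 * x < 2 * n := by nlinarith [hx.2]
      have : Real.log (4 * x) ≤ Real.log (2*n) := Real.log_le_log (by positivity) h4.le
      calc Real.log x + 2 * Real.log 2 = Real.log (4 * x) := by
            rw [Real.log_mul (by norm_num) hx0.ne', show (4:ℝ) = 2^2 by norm_num,
              Real.log_pow]
            push_cast; ring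
        _ ≤ Real.log (2*n) := this
    have hl2 : (0.6931471803:ℝ) < Real.log 2 := Real.log_two_gt_d9
    have hxx : 2 * x * x⁻¹ = 2 := by field_simp
    rw [hxx]
    nlinarith
  intro a ha b hb hab
  have key : ∀ x ∈ Set.Ioo (0:ℝ) ((n:ℝ)/2),
      x / 2 * (2 * n / x) ^ (2 * x) = Real.exp (g x) := by
    intro x hx
    have hx0 : (0:ℝ) < x := hx.1
    have hb0 : (0:ℝ) < 2 * n / x := by positivity
    rw [Real.rpow_def_of_pos hb0, hg]
    have hlogdiv : Real.log (2 * n / x) = Real.log (2*n) - Real.log x :=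
      Real.log_div (by positivity) hx0.ne'
    rw [hlogdiv]
    have hx2 : x / 2 = Real.exp (Real.log x - Real.log 2) := by
      rw [Real.exp_sub, Real.exp_log hx0, Real.exp_log (by norm_num)]
    rw [hx2, ← Real.exp_add]
    ring_nf
  simp only
  rw [key a ha, key b hb, Real.exp_lt_exp]
  exact hgmono ha hb hab
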